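/- Let R be a finite commutative ring with unity and A an N × N matrix over R. Then det(A) is zero or a zero divisor in R if and only if the set of row vectors of A is dependent, i.e., there exist scalars r_0,...,r_{N-1} ∈ R, not all zero, with Σ_i r_i v_i = 0 where v_i are the rows of A. -/

import Mathlib

/-- In a finite nontrivial commutative ring, a non-unit is zero or a zero divisor. -/
lemma exists_zero_divisor_of_not_isUnit {R : Type*} [CommRing R] [Fintype R] [Nontrivial R]
    {a : R} (h : ¬ IsUnit a) : ∃ b : R, b ≠ 0 ∧ a * b = 0 := by
  have hni : ¬ Function.Injective (fun x : R => a * x) := by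
    intro hinj
    have hsurj : Function.Surjective (fun x : R => a * x) :=
      Finite.surjective_of_injective hinj
    obtain ⟨b, hb⟩ := hsurj 1
    exact h (IsUnit.of_mul_eq_one b hb)
  rw [Function.not_injective_iff] at hni
  obtain ⟨x, y, hxy, hne⟩ := hni
  exact ⟨x - y, sub_ne_zero.mpr hne, by rw [mul_sub, hxy, sub_self]⟩

/-- For a square matrix `A` over a finite commutative ring with unity, `det(A)` is
zero or a zero divisor if and only if the rows of `A` are dependent, i.e., some
nontrivial linear combination of the rows is zero. -/
theorem det_zero_or_zeroDivisor_iff_rows_dependent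
    {R : Type*} [CommRing R] [Fintype R] [Nontrivial R] {n : ℕ}
    (A : Matrix (Fin n) (Fin n) R) :
    (A.det = 0 ∨ (A.det ≠ 0 ∧ ∃ b : R, b ≠ 0 ∧ A.det * b = 0)) ↔
      ∃ r : Fin n → R, r ≠ 0 ∧ ∑ i, r i • A i = 0 := by
  have hcomb : ∀ r : Fin n → R, ∑ i, r i • A i = Matrix.vecMul r A := by
    intro r
    ext j
    simp [Matrix.vecMul, dotProduct, Finset.sum_apply, mul_comm]
  have key : ¬ IsUnit A.det ↔ ∃ r : Fin n → R, r ≠ 0 ∧ Matrix.vecMul r A = 0 := by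
    rw [← Matrix.isUnit_iff_isUnit_det, ← Matrix.vecMul_surjective_iff_isUnit]
    constructor
    · intro hns
      have hni : ¬ Function.Injective A.vecMul := fun hinj =>
        hns (Finite.surjective_of_injective hinj)
      rw [Function.not_injective_iff] at hni
      obtain ⟨x, y, hxy, hne⟩ := hni
      refine ⟨x - y, sub_ne_zero.mpr hne, ?_⟩
      rw [Matrix.sub_vecMul, hxy, sub_self]
    · rintro ⟨r, hr, hr0⟩ hsurj
      have hinj : Function.Injective A.vecMul :=
        Finite.injective_iff_surjective.mpr hsurj
      exact hr (hinj (by simpa using hr0))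
  constructor
  · rintro (h | ⟨_, b, hb, hab⟩)
    · obtain ⟨r, hr, hr0⟩ := key.mp (by simp [h])
      exact ⟨r, hr, by rw [hcomb]; exact hr0⟩
    · obtain ⟨r, hr, hr0⟩ := key.mp (fun hu => hb (by
        have := hu.unit.inv_mul
        calc b = (↑hu.unit⁻¹ * A.det) * b := by rw [IsUnit.val_inv_mul, one_mul]
        _ = ↑hu.unit⁻¹ * (A.det * b) := by ring
        _ = 0 := by rw [hab, mul_zero]))
      exact ⟨r, hr, by rw [hcomb]; exact hr0⟩
  · rintro ⟨r, hr, hr0⟩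
    rw [hcomb] at hr0
    have hnu : ¬ IsUnit A.det := key.mpr ⟨r, hr, hr0⟩
    by_cases hd : A.det = 0
    · exact Or.inl hd
    · exact Or.inr ⟨hd, exists_zero_divisor_of_not_isUnit hnu⟩
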